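/- Let ℓ, L, m, M ∈ ℝⁿ with ℓ_i ≤ L_i and m_i ≤ M_i for all i, and let Ω = {(x,y) ∈ ℝⁿ × ℝⁿ : ℓ_i ≤ x_i ≤ L_i, m_i ≤ y_i ≤ M_i for all i}. Then the convex envelope over Ω of the bilinear function (x,y) ↦ xᵀy decomposes coordinatewise: (Vex_Ω (xᵀy))(x,y) = Σ_{i=1}^n max{m_i x_i + ℓ_i y_i − ℓ_i m_i, M_i x_i + L_i y_i − L_i M_i} for all (x,y) ∈ Ω. -/

import Mathlib

lemma coord_wts (a b c d x y : ℝ) (hx : a ≤ x) (hx' : x ≤ b) (hy : c ≤ y) (hy' : y ≤ d) :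
    ∃ w : Fin 2 × Fin 2 → ℝ, (∀ q, 0 ≤ w q) ∧ (∑ q, w q) = 1 ∧
      (∑ q, w q * ![a, b] q.1) = x ∧ (∑ q, w q * ![c, d] q.2) = y ∧
      (∑ q, w q * (![a, b] q.1 * ![c, d] q.2))
        = max (c * x + a * y - a * c) (d * x + b * y - b * d) := by
  have hab : a ≤ b := hx.trans hx'
  have hcd : c ≤ d := hy.trans hy'
  obtain ⟨s, hs0, hs1, hxs⟩ : ∃ s, 0 ≤ s ∧ s ≤ 1 ∧ x = a + s * (b - a) := by
    by_cases hba : b = a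
    · exact ⟨0, le_refl _, zero_le_one, by subst hba; nlinarith⟩
    · have hba' : a < b := lt_of_le_of_ne hab (Ne.symm hba)
      have hne : b - a ≠ 0 := by linarith
      refine ⟨(x - a) / (b - a), div_nonneg (by linarith) (by linarith), ?_, by field_simp; ring⟩
      rw [div_le_one (by linarith)]; linarith
  obtain ⟨t, ht0, ht1, hyt⟩ : ∃ t, 0 ≤ t ∧ t ≤ 1 ∧ y = c + t * (d - c) := by
    by_cases hdc : d = c
    · exact ⟨0, le_refl _, zero_le_one, by subst hdc; nlinarith⟩
    · have hdc' : c < d := lt_of_le_of_ne hcd (Ne.symm hdc)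
      have hne : d - c ≠ 0 := by linarith
      refine ⟨(y - c) / (d - c), div_nonneg (by linarith) (by linarith), ?_, by field_simp; ring⟩
      rw [div_le_one (by linarith)]; linarith
  subst hxs; subst hyt
  by_cases h : s + t ≤ 1
  · refine ⟨fun q => ![![1 - s - t, t], ![s, 0]] q.1 q.2, ?_, ?_, ?_, ?_, ?_⟩
    · rintro ⟨q1, q2⟩; fin_cases q1 <;> fin_cases q2 <;> simp <;> linarith
    · simp only [Fintype.sum_prod_type, Fin.sum_univ_two, Matrix.cons_val_zero, Matrix.cons_val_one, Matrix.head_cons]; ring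
    · simp only [Fintype.sum_prod_type, Fin.sum_univ_two, Matrix.cons_val_zero, Matrix.cons_val_one, Matrix.head_cons]; ring
    · simp only [Fintype.sum_prod_type, Fin.sum_univ_two, Matrix.cons_val_zero, Matrix.cons_val_one, Matrix.head_cons]; ring
    · rw [max_eq_left (by nlinarith [mul_nonneg (mul_nonneg (by linarith : (0:ℝ) ≤ 1 - s - t) (by linarith : (0:ℝ) ≤ b - a)) (by linarith : (0:ℝ) ≤ d - c)])]
      simp only [Fintype.sum_prod_type, Fin.sum_univ_two, Matrix.cons_val_zero, Matrix.cons_val_one, Matrix.head_cons]; ring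
  · refine ⟨fun q => ![![0, 1 - s], ![1 - t, s + t - 1]] q.1 q.2, ?_, ?_, ?_, ?_, ?_⟩
    · rintro ⟨q1, q2⟩; fin_cases q1 <;> fin_cases q2 <;> simp <;> linarith
    · simp only [Fintype.sum_prod_type, Fin.sum_univ_two, Matrix.cons_val_zero, Matrix.cons_val_one, Matrix.head_cons]; ring
    · simp only [Fintype.sum_prod_type, Fin.sum_univ_two, Matrix.cons_val_zero, Matrix.cons_val_one, Matrix.head_cons]; ring
    · simp only [Fintype.sum_prod_type, Fin.sum_univ_two, Matrix.cons_val_zero, Matrix.cons_val_one, Matrix.head_cons]; ring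
    · rw [max_eq_right (by nlinarith [mul_nonneg (mul_nonneg (by linarith : (0:ℝ) ≤ s + t - 1) (by linarith : (0:ℝ) ≤ b - a)) (by linarith : (0:ℝ) ≤ d - c)])]
      simp only [Fintype.sum_prod_type, Fin.sum_univ_two, Matrix.cons_val_zero, Matrix.cons_val_one, Matrix.head_cons]; ring

lemma marginal_sum {n : ℕ} {C : Type*} [Fintype C] (w : Fin n → C → ℝ)
    (hw : ∀ i, ∑ c, w i c = 1) (j : Fin n) (f : C → ℝ) :
    ∑ K : Fin n → C, (∏ i, w i (K i)) * f (K j) = ∑ c, w j c * f c := by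
  classical
  set g : Fin n → C → ℝ := fun i c => if i = j then w i c * f c else w i c with hg
  have h1 : ∀ K : Fin n → C, (∏ i, w i (K i)) * f (K j) = ∏ i, g i (K i) := by
    intro K
    rw [Finset.prod_eq_mul_prod_sdiff_singleton_of_mem (Finset.mem_univ j) (fun i => g i (K i)),
        Finset.prod_eq_mul_prod_sdiff_singleton_of_mem (Finset.mem_univ j) (fun i => w i (K i))]
    have h2 : ∀ i ∈ Finset.univ \ {j}, g i (K i) = w i (K i) := by
      intro i hi
      simp only [Finset.mem_sdiff, Finset.mem_singleton] at hi
      simp [hg, hi.2]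
    rw [Finset.prod_congr rfl h2]
    simp [hg]
    ring
  simp_rw [h1]
  rw [← Fintype.prod_sum]
  rw [Finset.prod_eq_mul_prod_sdiff_singleton_of_mem (Finset.mem_univ j) (fun i => ∑ c, g i c)]
  have h3 : ∀ i ∈ Finset.univ \ {j}, (∑ c, g i c) = 1 := by
    intro i hi
    simp only [Finset.mem_sdiff, Finset.mem_singleton] at hi
    simp [hg, hi.2, hw i]
  rw [Finset.prod_congr rfl h3, Finset.prod_const_one]
  simp [hg]

/-- The convex envelope of a function `F` over a set `D`: the pointwise supremum of all
convex functions on `D` underestimating `F` on `D`. -/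
noncomputable def convexEnvelope {E : Type*} [AddCommGroup E] [Module ℝ E]
    (D : Set E) (F : E → ℝ) (p : E) : ℝ :=
  sSup {v | ∃ g : E → ℝ, ConvexOn ℝ D g ∧ (∀ q ∈ D, g q ≤ F q) ∧ v = g p}

/-- Over a hyperrectangle `Ω = Ω(ℓ,L,m,M) ⊂ ℝⁿ × ℝⁿ`, the convex envelope of the bilinear
function `(x,y) ↦ xᵀy` decomposes coordinatewise:
`(Vex_Ω (xᵀy))(x,y) = Σᵢ max {mᵢxᵢ + ℓᵢyᵢ − ℓᵢmᵢ, Mᵢxᵢ + Lᵢyᵢ − LᵢMᵢ}`. -/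
theorem stmt_3 (n : ℕ) (ℓ L m M : Fin n → ℝ)
    (hℓL : ∀ i, ℓ i ≤ L i) (hmM : ∀ i, m i ≤ M i)
    (Ω : Set ((Fin n → ℝ) × (Fin n → ℝ)))
    (hΩ : Ω = {p | ∀ i, ℓ i ≤ p.1 i ∧ p.1 i ≤ L i ∧ m i ≤ p.2 i ∧ p.2 i ≤ M i}) :
    ∀ p ∈ Ω, convexEnvelope Ω (fun q => ∑ i, q.1 i * q.2 i) p =
      ∑ i, max (m i * p.1 i + ℓ i * p.2 i - ℓ i * m i)
        (M i * p.1 i + L i * p.2 i - L i * M i) := by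
  intro p hp
  have hDconv : Convex ℝ Ω := by
    rw [hΩ]
    intro u hu v hv α β hα hβ hαβ i
    have hu' := hu i; have hv' := hv i
    have e1 : (α • u + β • v).1 i = α * u.1 i + β * v.1 i := rfl
    have e2 : (α • u + β • v).2 i = α * u.2 i + β * v.2 i := rfl
    have key : ∀ z : ℝ, z = α * z + β * z := fun z => by rw [← add_mul, hαβ, one_mul]
    refine ⟨?_, ?_, ?_, ?_⟩
    · rw [e1]
      linarith [mul_le_mul_of_nonneg_left hu'.1 hα, mul_le_mul_of_nonneg_left hv'.1 hβ, key (ℓ i)]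
    · rw [e1]
      linarith [mul_le_mul_of_nonneg_left hu'.2.1 hα, mul_le_mul_of_nonneg_left hv'.2.1 hβ, key (L i)]
    · rw [e2]
      linarith [mul_le_mul_of_nonneg_left hu'.2.2.1 hα, mul_le_mul_of_nonneg_left hv'.2.2.1 hβ, key (m i)]
    · rw [e2]
      linarith [mul_le_mul_of_nonneg_left hu'.2.2.2 hα, mul_le_mul_of_nonneg_left hv'.2.2.2 hβ, key (M i)]
  have haff : ∀ (A B C : ℝ) (i : Fin n), ConvexOn ℝ Ω (fun q => A * q.1 i + B * q.2 i + C) := by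
    intro A B C i
    refine ⟨hDconv, ?_⟩
    intro u _ v _ α β _ _ hαβ
    have e1 : (α • u + β • v).1 i = α * u.1 i + β * v.1 i := rfl
    have e2 : (α • u + β • v).2 i = α * u.2 i + β * v.2 i := rfl
    simp only [smul_eq_mul]
    rw [e1, e2]
    have heq : A * (α * u.1 i + β * v.1 i) + B * (α * u.2 i + β * v.2 i) + C
        = α * (A * u.1 i + B * u.2 i + C) + β * (A * v.1 i + B * v.2 i + C) := by
      linear_combination (-C) * hαβ
    exact le_of_eq heq
  have hmaxconv : ∀ i : Fin n, ConvexOn ℝ Ω (fun q =>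
      max (m i * q.1 i + ℓ i * q.2 i - ℓ i * m i) (M i * q.1 i + L i * q.2 i - L i * M i)) := by
    intro i
    have h1 := haff (m i) (ℓ i) (-(ℓ i * m i)) i
    have h2 := haff (M i) (L i) (-(L i * M i)) i
    have heq : (fun q : (Fin n → ℝ) × (Fin n → ℝ) =>
        max (m i * q.1 i + ℓ i * q.2 i - ℓ i * m i) (M i * q.1 i + L i * q.2 i - L i * M i))
        = (fun q => m i * q.1 i + ℓ i * q.2 i + -(ℓ i * m i)) ⊔
          (fun q => M i * q.1 i + L i * q.2 i + -(L i * M i)) := by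
      funext q
      rw [Pi.sup_apply, sub_eq_add_neg, sub_eq_add_neg]
    rw [heq]
    exact h1.sup h2
  have hEconv : ConvexOn ℝ Ω (fun q => ∑ i, max (m i * q.1 i + ℓ i * q.2 i - ℓ i * m i)
      (M i * q.1 i + L i * q.2 i - L i * M i)) := by
    have key : ∀ t : Finset (Fin n), ConvexOn ℝ Ω (fun q => ∑ i ∈ t,
        max (m i * q.1 i + ℓ i * q.2 i - ℓ i * m i) (M i * q.1 i + L i * q.2 i - L i * M i)) := by
      intro t
      induction t using Finset.induction with
      | empty => simpa using convexOn_const (0 : ℝ) hDconv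
      | insert _ _ hnot ih =>
        simp only [Finset.sum_insert hnot]
        exact (hmaxconv _).add ih
    exact key Finset.univ
  have hEleF : ∀ q ∈ Ω, (∑ i, max (m i * q.1 i + ℓ i * q.2 i - ℓ i * m i)
      (M i * q.1 i + L i * q.2 i - L i * M i)) ≤ ∑ i, q.1 i * q.2 i := by
    intro q hq
    rw [hΩ] at hq
    refine Finset.sum_le_sum fun i _ => ?_
    have h := hq i
    apply max_le
    · nlinarith [mul_nonneg (sub_nonneg.2 h.1) (sub_nonneg.2 h.2.2.1)]
    · nlinarith [mul_nonneg (sub_nonneg.2 h.2.1) (sub_nonneg.2 h.2.2.2)]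
  have hp' : ∀ i, ℓ i ≤ p.1 i ∧ p.1 i ≤ L i ∧ m i ≤ p.2 i ∧ p.2 i ≤ M i := by
    rw [hΩ] at hp; exact hp
  have hub : ∀ v ∈ {v | ∃ g : (Fin n → ℝ) × (Fin n → ℝ) → ℝ, ConvexOn ℝ Ω g ∧
      (∀ q ∈ Ω, g q ≤ (fun q => ∑ i, q.1 i * q.2 i) q) ∧ v = g p},
      v ≤ ∑ i, max (m i * p.1 i + ℓ i * p.2 i - ℓ i * m i)
        (M i * p.1 i + L i * p.2 i - L i * M i) := by
    rintro v ⟨g, hgconv, hgle, rfl⟩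
    have H : ∀ i : Fin n, ∃ w : Fin 2 × Fin 2 → ℝ, (∀ q, 0 ≤ w q) ∧ (∑ q, w q) = 1 ∧
        (∑ q, w q * ![ℓ i, L i] q.1) = p.1 i ∧ (∑ q, w q * ![m i, M i] q.2) = p.2 i ∧
        (∑ q, w q * (![ℓ i, L i] q.1 * ![m i, M i] q.2))
          = max (m i * p.1 i + ℓ i * p.2 i - ℓ i * m i)
              (M i * p.1 i + L i * p.2 i - L i * M i) :=
      fun i => coord_wts _ _ _ _ _ _ (hp' i).1 (hp' i).2.1 (hp' i).2.2.1 (hp' i).2.2.2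
    choose w hw0 hw1 hwx hwy hwF using H
    set V : (Fin n → Fin 2 × Fin 2) → (Fin n → ℝ) × (Fin n → ℝ) :=
      fun K => (fun i => ![ℓ i, L i] (K i).1, fun i => ![m i, M i] (K i).2) with hV
    set W : (Fin n → Fin 2 × Fin 2) → ℝ := fun K => ∏ i, w i (K i) with hW
    have hW0 : ∀ K, 0 ≤ W K := fun K => Finset.prod_nonneg fun i _ => hw0 i _
    have hW1 : ∑ K, W K = 1 := by
      rw [hW, ← Fintype.prod_sum]
      simp [hw1]
    have hVmem : ∀ K, V K ∈ Ω := by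
      intro K
      rw [hΩ]
      intro i
      have hx : ∀ c : Fin 2, ℓ i ≤ ![ℓ i, L i] c ∧ ![ℓ i, L i] c ≤ L i := by
        intro c; fin_cases c <;> simp [hℓL i]
      have hy : ∀ c : Fin 2, m i ≤ ![m i, M i] c ∧ ![m i, M i] c ≤ M i := by
        intro c; fin_cases c <;> simp [hmM i]
      exact ⟨(hx _).1, (hx _).2, (hy _).1, (hy _).2⟩
    have hmarg : ∀ (j : Fin n) (f : Fin 2 × Fin 2 → ℝ),
        ∑ K : Fin n → Fin 2 × Fin 2, W K * f (K j) = ∑ c, w j c * f c :=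
      fun j f => marginal_sum w hw1 j f
    have hrep : ∑ K, W K • V K = p := by
      have h1 : (∑ K, W K • V K).1 = p.1 := by
        rw [Prod.fst_sum]
        funext j
        rw [Finset.sum_apply]
        have e : ∀ K, (W K • V K).1 j = W K * ![ℓ j, L j] (K j).1 := fun K => rfl
        simp_rw [e]
        exact (hmarg j (fun c => ![ℓ j, L j] c.1)).trans (hwx j)
      have h2 : (∑ K, W K • V K).2 = p.2 := by
        rw [Prod.snd_sum]
        funext j
        rw [Finset.sum_apply]
        have e : ∀ K, (W K • V K).2 j = W K * ![m j, M j] (K j).2 := fun K => rfl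
        simp_rw [e]
        exact (hmarg j (fun c => ![m j, M j] c.2)).trans (hwy j)
      exact Prod.ext h1 h2
    have hFsum : ∑ K, W K * (∑ j, (V K).1 j * (V K).2 j)
        = ∑ j, max (m j * p.1 j + ℓ j * p.2 j - ℓ j * m j)
            (M j * p.1 j + L j * p.2 j - L j * M j) := by
      have e : ∀ K, W K * (∑ j, (V K).1 j * (V K).2 j)
          = ∑ j, W K * ((V K).1 j * (V K).2 j) := fun K => Finset.mul_sum _ _ _
      simp_rw [e]
      rw [Finset.sum_comm]
      refine Finset.sum_congr rfl fun j _ => ?_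
      exact (hmarg j (fun c => ![ℓ j, L j] c.1 * ![m j, M j] c.2)).trans (hwF j)
    calc g p = g (∑ K, W K • V K) := by rw [hrep]
      _ ≤ ∑ K, W K • g (V K) :=
          hgconv.map_sum_le (fun K _ => hW0 K) hW1 (fun K _ => hVmem K)
      _ ≤ ∑ K, W K * (∑ j, (V K).1 j * (V K).2 j) := by
          refine Finset.sum_le_sum fun K _ => ?_
          rw [smul_eq_mul]
          exact mul_le_mul_of_nonneg_left (hgle (V K) (hVmem K)) (hW0 K)
      _ = _ := hFsum
  have hmem : (∑ i, max (m i * p.1 i + ℓ i * p.2 i - ℓ i * m i)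
      (M i * p.1 i + L i * p.2 i - L i * M i)) ∈
      {v | ∃ g : (Fin n → ℝ) × (Fin n → ℝ) → ℝ, ConvexOn ℝ Ω g ∧
        (∀ q ∈ Ω, g q ≤ (fun q => ∑ i, q.1 i * q.2 i) q) ∧ v = g p} :=
    ⟨_, hEconv, hEleF, rfl⟩
  exact IsGreatest.csSup_eq ⟨hmem, hub⟩
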